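/- Let Q = (Q_L, Q_R) be a discrete policy and μ > 0. For any initial vector W⁽⁰⁾ ∈ ℝ^I with W⁽⁰⁾_i ≥ 0 for all i and h·∑_i W⁽⁰⁾_i = 1, define iteratively W^{(s+1)} as the unique solution of (μI + A(Q)) W^{(s+1)} = μ W^{(s)}. Then the whole sequence W^{(s)} converges, as s → ∞, to the unique M ∈ ℝ^I satisfying A(Q)M = 0, h·∑_i M_i = 1 and M ≥ 0. -/

import Mathlib

open Matrix Filter Topology

set_option linter.unusedSectionVars false
set_option maxHeartbeats 1000000

noncomputable section

/-- Grid step `h = 1/I`. -/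
def hh (I : ℕ) : ℝ := (I : ℝ)⁻¹

/-- Discrete periodic Laplacian `(Δ♯U)_i = (U_{i-1} - 2U_i + U_{i+1})/h²`. -/
def lapD (I : ℕ) (U : ZMod I → ℝ) (i : ZMod I) : ℝ :=
  (U (i - 1) - 2 * U i + U (i + 1)) / hh I ^ 2

/-- Left discrete derivative `(D_L U)_i = (U_i - U_{i-1})/h`. -/
def DLd (I : ℕ) (U : ZMod I → ℝ) (i : ZMod I) : ℝ := (U i - U (i - 1)) / hh I

/-- Right discrete derivative `(D_R U)_i = (U_{i+1} - U_i)/h`. -/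
def DRd (I : ℕ) (U : ZMod I → ℝ) (i : ZMod I) : ℝ := (U (i + 1) - U i) / hh I

/-- Positive part `a⁺ = max(a,0)`. -/
def pp (a : ℝ) : ℝ := max a 0

/-- Negative part `a⁻ = min(a,0)`. -/
def np (a : ℝ) : ℝ := min a 0

/-- The discrete Fokker–Planck matrix `A(Q)` associated to a discrete policy
`Q = (Q_L, Q_R)`: `A(Q)_{i,i} = 2ε/h² + Q_{L,i}⁺/h − Q_{R,i}⁻/h`,
`A(Q)_{i,i−1} = −ε/h² + Q_{R,i−1}⁻/h`, `A(Q)_{i,i+1} = −ε/h² − Q_{L,i+1}⁺/h`,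
all other entries zero (indices mod `I`). -/
def FPmat (I : ℕ) (ε : ℝ) (QL QR : ZMod I → ℝ) : Matrix (ZMod I) (ZMod I) ℝ :=
  fun i j =>
    (if j = i then 2 * ε / hh I ^ 2 + pp (QL i) / hh I - np (QR i) / hh I else 0)
    + (if j = i - 1 then -ε / hh I ^ 2 + np (QR (i - 1)) / hh I else 0)
    + (if j = i + 1 then -ε / hh I ^ 2 - pp (QL (i + 1)) / hh I else 0)

end

section auxGen
variable {n : Type*} [Fintype n] [DecidableEq n] [Nonempty n]

/-- Minimum principle for column-dominant matrices with nonpositive off-diagonal entries. -/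
lemma aux_nonneg {B : Matrix n n ℝ} {μ : ℝ} (hμ : 0 < μ)
    (hoff : ∀ j k, j ≠ k → B j k ≤ 0) (hcol : ∀ k, ∑ j, B j k = μ)
    {x : n → ℝ} (hy : ∀ k, 0 ≤ (x ᵥ* B) k) : ∀ k, 0 ≤ x k := by
  obtain ⟨k0, -, hk0⟩ :=
    Finset.exists_min_image Finset.univ x ⟨Classical.arbitrary n, Finset.mem_univ _⟩
  intro k
  have hk0' : ∀ j, x k0 ≤ x j := fun j => hk0 j (Finset.mem_univ j)
  have key : 0 ≤ x k0 := by
    by_contra hneg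
    push_neg at hneg
    have h1 : (x ᵥ* B) k0 ≤ x k0 * μ := by
      have hterm : ∀ j, x j * B j k0 ≤ x k0 * B j k0 := by
        intro j
        rcases eq_or_ne j k0 with rfl | hne
        · exact le_refl _
        · exact mul_le_mul_of_nonpos_right (hk0' j) (hoff j k0 hne)
      calc (x ᵥ* B) k0 = ∑ j, x j * B j k0 := by simp [Matrix.vecMul, dotProduct]
        _ ≤ ∑ j, x k0 * B j k0 := Finset.sum_le_sum fun j _ => hterm j
        _ = x k0 * μ := by rw [← Finset.mul_sum, hcol]
    nlinarith [hy k0]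
  exact le_trans key (hk0' k)

/-- ℓ¹-contraction on zero-sum vectors for matrices with entries ≥ c and unit column sums. -/
lemma aux_contract {P : Matrix n n ℝ} {c : ℝ}
    (hc : ∀ i j, c ≤ P i j) (hcol : ∀ j, ∑ i, P i j = 1)
    {v : n → ℝ} (hv : ∑ j, v j = 0) :
    ∑ i, |(P *ᵥ v) i| ≤ (1 - Fintype.card n * c) * ∑ j, |v j| := by
  have h1 : ∀ i, (P *ᵥ v) i = ∑ j, (P i j - c) * v j := by
    intro i
    have : ∑ j, (P i j - c) * v j = ∑ j, P i j * v j - c * ∑ j, v j := by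
      rw [Finset.mul_sum, ← Finset.sum_sub_distrib]; exact Finset.sum_congr rfl fun j _ => by ring
    rw [this, hv, mul_zero, sub_zero]
    simp [Matrix.mulVec, dotProduct]
  have h2 : ∀ i, |(P *ᵥ v) i| ≤ ∑ j, (P i j - c) * |v j| := by
    intro i
    rw [h1]
    refine le_trans (Finset.abs_sum_le_sum_abs _ _) (Finset.sum_le_sum fun j _ => ?_)
    rw [abs_mul, abs_of_nonneg (sub_nonneg.mpr (hc i j))]
  calc ∑ i, |(P *ᵥ v) i| ≤ ∑ i, ∑ j, (P i j - c) * |v j| :=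
        Finset.sum_le_sum fun i _ => h2 i
    _ = ∑ j, (∑ i, (P i j - c)) * |v j| := by
        rw [Finset.sum_comm]
        exact Finset.sum_congr rfl fun j _ => (Finset.sum_mul _ _ _).symm
    _ = ∑ j, (1 - Fintype.card n * c) * |v j| := by
        refine Finset.sum_congr rfl fun j _ => ?_
        rw [Finset.sum_sub_distrib, hcol]
        simp [Finset.card_univ, mul_comm]
    _ = (1 - Fintype.card n * c) * ∑ j, |v j| := by rw [Finset.mul_sum]

end auxGen

/-- Strict positivity via irreducibility along the cycle. -/
lemma aux_pos {I : ℕ} [NeZero I] {B : Matrix (ZMod I) (ZMod I) ℝ} {μ : ℝ} (hμ : 0 < μ)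
    (hoff : ∀ j k, j ≠ k → B j k ≤ 0) (hcol : ∀ k, ∑ j, B j k = μ)
    (hsub : ∀ k, B (k + 1) k < 0)
    {x : ZMod I → ℝ} (hy : ∀ k, 0 ≤ (x ᵥ* B) k) (hy0 : x ᵥ* B ≠ 0) :
    ∀ k, 0 < x k := by
  have hxnn := aux_nonneg hμ hoff hcol hy
  have hstep : ∀ k, x k = 0 → x (k + 1) = 0 := by
    intro k hk
    have hterm : ∀ j ∈ Finset.univ, x j * B j k ≤ 0 := by
      intro j _
      rcases eq_or_ne j k with rfl | hne
      · simp [hk]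
      · exact mul_nonpos_of_nonneg_of_nonpos (hxnn j) (hoff j k hne)
    have hsum : ∑ j, x j * B j k = (x ᵥ* B) k := by
      simp [Matrix.vecMul, dotProduct]
    have hle : (x ᵥ* B) k ≤ 0 := hsum ▸ Finset.sum_nonpos hterm
    have hz : ∑ j, x j * B j k = 0 := by
      rw [hsum]; exact le_antisymm hle (hy k)
    have := (Finset.sum_eq_zero_iff_of_nonpos hterm).mp hz (k + 1) (Finset.mem_univ _)
    rcases mul_eq_zero.mp this with h | h
    · exact h
    · exact absurd h (ne_of_lt (hsub k))
  by_contra hcon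
  push_neg at hcon
  obtain ⟨k, hkle⟩ := hcon
  have hk0 : x k = 0 := le_antisymm hkle (hxnn k)
  have hall : ∀ m : ℕ, x (k + m) = 0 := by
    intro m
    induction m with
    | zero => simpa using hk0
    | succ m ih =>
      have := hstep (k + m) ih
      rw [show ((k + ↑(m + 1)) : ZMod I) = k + ↑m + 1 by push_cast; ring]; exact this
  have hx0 : x = 0 := by
    funext j
    have := hall (j - k).val
    rwa [ZMod.natCast_val, ZMod.cast_id, add_sub_cancel] at this
  exact hy0 (by simp [hx0, Matrix.vecMul, dotProduct])

section fpfacts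
variable {I : ℕ} [NeZero I] (hI : 3 ≤ I) {ε : ℝ} (hε : 0 < ε) (QL QR : ZMod I → ℝ)

lemma hh_pos : 0 < hh I := by
  have : (0:ℝ) < I := by exact_mod_cast Nat.pos_of_ne_zero (NeZero.ne I)
  simpa [hh] using inv_pos.mpr this

include hI in
lemma one_ne_zero_zmod : (1 : ZMod I) ≠ 0 := by
  intro h
  have hd : I ∣ 1 := (ZMod.natCast_eq_zero_iff 1 I).mp (by exact_mod_cast h)
  have := Nat.le_of_dvd (by norm_num) hd
  omega

include hI in
lemma two_ne_zero_zmod : (2 : ZMod I) ≠ 0 := by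
  intro h
  have hd : I ∣ 2 := (ZMod.natCast_eq_zero_iff 2 I).mp (by exact_mod_cast h)
  have := Nat.le_of_dvd (by norm_num) hd
  omega

lemma fp_col (j : ZMod I) : ∑ i, FPmat I ε QL QR i j = 0 := by
  simp only [FPmat]
  rw [Finset.sum_add_distrib, Finset.sum_add_distrib]
  have e1 : ∑ i, (if j = i then 2 * ε / hh I ^ 2 + pp (QL i) / hh I - np (QR i) / hh I else 0)
      = 2 * ε / hh I ^ 2 + pp (QL j) / hh I - np (QR j) / hh I := by
    rw [Finset.sum_ite_eq]; simp
  have e2 : ∑ i, (if j = i - 1 then -ε / hh I ^ 2 + np (QR (i - 1)) / hh I else 0)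
      = -ε / hh I ^ 2 + np (QR j) / hh I := by
    simp_rw [eq_sub_iff_add_eq]
    rw [Finset.sum_ite_eq]
    simp
  have e3 : ∑ i, (if j = i + 1 then -ε / hh I ^ 2 - pp (QL (i + 1)) / hh I else 0)
      = -ε / hh I ^ 2 - pp (QL j) / hh I := by
    simp_rw [show ∀ i : ZMod I, (j = i + 1) ↔ (j - 1 = i) from fun i => by
      rw [sub_eq_iff_eq_add]]
    rw [Finset.sum_ite_eq]
    simp
  rw [e1, e2, e3]; ring

include hε in
lemma fp_off {i j : ZMod I} (hij : j ≠ i) : FPmat I ε QL QR i j ≤ 0 := by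
  have hp : 0 < hh I := hh_pos (I := I)
  have t1 : -ε / hh I ^ 2 + np (QR (i - 1)) / hh I ≤ 0 := by
    have : np (QR (i-1)) ≤ 0 := min_le_right _ _
    have h2 : np (QR (i-1)) / hh I ≤ 0 := div_nonpos_iff.mpr (Or.inr ⟨this, hp.le⟩)
    have hneg : -ε / hh I ^ 2 < 0 := by
      rw [neg_div]; linarith [div_pos hε (pow_pos hp 2)]
    linarith
  have t2 : -ε / hh I ^ 2 - pp (QL (i + 1)) / hh I ≤ 0 := by
    have : 0 ≤ pp (QL (i+1)) := le_max_right _ _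
    have h2 : 0 ≤ pp (QL (i+1)) / hh I := div_nonneg this hp.le
    have hneg : -ε / hh I ^ 2 < 0 := by
      rw [neg_div]; linarith [div_pos hε (pow_pos hp 2)]
    linarith
  simp only [FPmat, if_neg hij]
  have := add_nonpos (b := if j = i + 1 then -ε / hh I ^ 2 - pp (QL (i + 1)) / hh I else 0)
    (a := if j = i - 1 then -ε / hh I ^ 2 + np (QR (i - 1)) / hh I else 0)
    (by split <;> [exact t1; exact le_refl 0]) (by split <;> [exact t2; exact le_refl 0])
  linarith

include hI hε in
lemma fp_sub (k : ZMod I) : FPmat I ε QL QR (k + 1) k < 0 := by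
  have hp : 0 < hh I := hh_pos (I := I)
  have h1 : (1 : ZMod I) ≠ 0 := one_ne_zero_zmod hI
  have h2 : (2 : ZMod I) ≠ 0 := two_ne_zero_zmod hI
  have c1 : ¬ (k = k + 1) := fun h => h1 (by linear_combination -h)
  have c2 : ((k:ZMod I) = k + 1 - 1) := by ring
  have c3 : ¬ ((k:ZMod I) = k + 1 + 1) := by
    intro h
    exact h2 (by linear_combination -(h.trans (by ring : (k:ZMod I) + 1 + 1 = k + 2)))
  rw [show FPmat I ε QL QR (k+1) k
      = (if (k:ZMod I) = k + 1 then
          2 * ε / hh I ^ 2 + pp (QL (k+1)) / hh I - np (QR (k+1)) / hh I else 0)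
      + (if (k:ZMod I) = k + 1 - 1 then -ε / hh I ^ 2 + np (QR (k + 1 - 1)) / hh I else 0)
      + (if (k:ZMod I) = k + 1 + 1 then -ε / hh I ^ 2 - pp (QL (k + 1 + 1)) / hh I else 0)
      from rfl,
    if_neg c1, if_pos c2, if_neg c3, add_zero, zero_add]
  have e : (k : ZMod I) + 1 - 1 = k := by ring
  rw [e]
  have hnp : np (QR k) / hh I ≤ 0 := div_nonpos_iff.mpr (Or.inr ⟨min_le_right _ _, hp.le⟩)
  have hneg : -ε / hh I ^ 2 < 0 := by
    rw [neg_div]; linarith [div_pos hε (pow_pos hp 2)]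
  linarith

end fpfacts

/-- the M-matrix iteration `(μI + A(Q))W^{(s+1)} = μW^{(s)}`, started from
any nonnegative `W^{(0)}` of unit discrete mass, converges (as a whole sequence) to the
unique `M` with `A(Q)M = 0`, `h·∑_i M_i = 1` and `M ≥ 0`. -/
theorem statement_12 (I : ℕ) [NeZero I] (hI : 3 ≤ I) (ε : ℝ) (hε : 0 < ε)
    (QL QR : ZMod I → ℝ) (μ : ℝ) (hμ : 0 < μ)
    (W : ℕ → ZMod I → ℝ)
    (hW0 : ∀ i, 0 ≤ W 0 i) (hW0sum : hh I * ∑ i, W 0 i = 1)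
    (hiter : ∀ s : ℕ,
      (μ • (1 : Matrix (ZMod I) (ZMod I) ℝ) + FPmat I ε QL QR).mulVec (W (s + 1))
        = μ • W s) :
    ∃ M : ZMod I → ℝ,
      ((FPmat I ε QL QR).mulVec M = 0 ∧ hh I * ∑ i, M i = 1 ∧ ∀ i, 0 ≤ M i) ∧
      (∀ M' : ZMod I → ℝ,
        ((FPmat I ε QL QR).mulVec M' = 0 ∧ hh I * ∑ i, M' i = 1 ∧ ∀ i, 0 ≤ M' i) →
        M' = M) ∧
      Filter.Tendsto W Filter.atTop (nhds M) := by
  classical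
  have hp : 0 < hh I := hh_pos
  set A := FPmat I ε QL QR with hA
  set B : Matrix (ZMod I) (ZMod I) ℝ := μ • 1 + A with hBdef
  have hAcol : ∀ j : ZMod I, ∑ i, A i j = 0 := fun j => fp_col QL QR j
  have hBcol : ∀ k : ZMod I, ∑ j, B j k = μ := by
    intro k
    simp only [hBdef, Matrix.add_apply, Matrix.smul_apply, smul_eq_mul]
    rw [Finset.sum_add_distrib, hAcol, add_zero, ← Finset.mul_sum]
    simp [Matrix.one_apply]
  have hBoff : ∀ j k : ZMod I, j ≠ k → B j k ≤ 0 := by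
    intro j k h
    simp only [hBdef, Matrix.add_apply, Matrix.smul_apply, Matrix.one_apply, if_neg h,
      smul_eq_mul, mul_zero, zero_add]
    exact fp_off hε QL QR (Ne.symm h)
  have hone : (1 : ZMod I) ≠ 0 := one_ne_zero_zmod hI
  have hBsub : ∀ k : ZMod I, B (k + 1) k < 0 := by
    intro k
    have hne : (k + 1 : ZMod I) ≠ k := fun h => hone (by linear_combination h)
    simp only [hBdef, Matrix.add_apply, Matrix.smul_apply, Matrix.one_apply, if_neg hne,
      smul_eq_mul, mul_zero, zero_add]
    exact fp_sub hI hε QL QR k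
  -- invertibility of B
  have hker : ∀ z : ZMod I → ℝ, z ᵥ* B = 0 → z = 0 := by
    intro z hz
    have h₁ := aux_nonneg hμ hBoff hBcol (x := z)
      (by intro k; rw [hz]; exact le_refl 0)
    have h₂ := aux_nonneg hμ hBoff hBcol (x := -z)
      (by intro k; rw [Matrix.neg_vecMul, hz]; simp)
    funext k
    have h2 := h₂ k
    simp only [Pi.neg_apply, neg_nonneg] at h2
    show z k = 0
    exact le_antisymm h2 (h₁ k)
  have hinj : Function.Injective B.vecMul := by
    intro x y hxy
    have hxy' : x ᵥ* B = y ᵥ* B := hxy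
    have hz : (x - y) ᵥ* B = 0 := by rw [Matrix.sub_vecMul, hxy', sub_self]
    exact sub_eq_zero.mp (hker (x - y) hz)
  have hBunit : IsUnit B := Matrix.vecMul_injective_iff_isUnit.mp hinj
  have hdet : IsUnit B.det := (Matrix.isUnit_iff_isUnit_det B).mp hBunit
  have hBB : B * B⁻¹ = 1 := Matrix.mul_nonsing_inv B hdet
  have hBB' : B⁻¹ * B = 1 := Matrix.nonsing_inv_mul B hdet
  set P : Matrix (ZMod I) (ZMod I) ℝ := μ • B⁻¹ with hPdef
  -- positivity of P
  have hBinv_pos : ∀ i j, 0 < B⁻¹ i j := by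
    intro i j
    have hrow : (B⁻¹ i) ᵥ* B = (1 : Matrix (ZMod I) (ZMod I) ℝ) i := by
      funext k
      have h : ((B⁻¹ i) ᵥ* B) k = (B⁻¹ * B) i k := by
        simp [Matrix.mul_apply, Matrix.vecMul, dotProduct]
      rw [h, hBB']
    have hy : ∀ k, 0 ≤ ((B⁻¹ i) ᵥ* B) k := by
      intro k; rw [hrow]
      by_cases h : i = k <;> simp [Matrix.one_apply, h]
    have hy0 : (B⁻¹ i) ᵥ* B ≠ 0 := by
      rw [hrow]; intro h
      have := congrFun h i
      simp [Matrix.one_apply] at this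
    exact aux_pos hμ hBoff hBcol hBsub hy hy0 j
  have hPpos : ∀ i j, 0 < P i j := by
    intro i j
    have : P i j = μ * B⁻¹ i j := rfl
    rw [this]; exact mul_pos hμ (hBinv_pos i j)
  -- column sums of P
  have hPcol : ∀ j, ∑ i, P i j = 1 := by
    intro j
    have h1 : ((fun _ => (1:ℝ)) ᵥ* B) = μ • (fun _ => (1:ℝ)) := by
      funext k
      have : ((fun _ => (1:ℝ)) ᵥ* B) k = ∑ i, B i k := by
        simp [Matrix.vecMul, dotProduct]
      rw [this, hBcol k]; simp
    have h2 : ((fun _ => (1:ℝ)) ᵥ* B) ᵥ* B⁻¹ = (fun _ => (1:ℝ)) := by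
      rw [Matrix.vecMul_vecMul, hBB, Matrix.vecMul_one]
    rw [h1] at h2
    have h3 := congrFun h2 j
    have h4 : ((μ • (fun _ => (1:ℝ))) ᵥ* B⁻¹) j = ∑ i, μ * B⁻¹ i j := by
      simp [Matrix.vecMul, dotProduct]
    rw [h4] at h3
    calc ∑ i, P i j = ∑ i, μ * B⁻¹ i j := rfl
      _ = 1 := h3
  -- step relation
  have hstep : ∀ s, W (s+1) = P *ᵥ (W s) := by
    intro s
    have h1 := hiter s
    have h2 : B⁻¹ *ᵥ (B *ᵥ W (s+1)) = B⁻¹ *ᵥ (μ • W s) := by rw [h1]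
    rw [Matrix.mulVec_mulVec, hBB', Matrix.one_mulVec, Matrix.mulVec_smul] at h2
    rw [h2, hPdef, Matrix.smul_mulVec]
  -- mass preservation
  have hmass : ∀ v : ZMod I → ℝ, ∑ i, (P *ᵥ v) i = ∑ i, v i := by
    intro v
    calc ∑ i, (P *ᵥ v) i = ∑ i, ∑ j, P i j * v j := by
          simp [Matrix.mulVec, dotProduct]
      _ = ∑ j, (∑ i, P i j) * v j := by
          rw [Finset.sum_comm]
          exact Finset.sum_congr rfl fun j _ => (Finset.sum_mul _ _ _).symm
      _ = ∑ j, v j := by simp [hPcol]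
  have hWsum : ∀ s, ∑ i, W s i = ∑ i, W 0 i := by
    intro s; induction s with
    | zero => rfl
    | succ s ih => rw [hstep s, hmass, ih]
  have hWnn : ∀ s, ∀ i, 0 ≤ W s i := by
    intro s; induction s with
    | zero => exact hW0
    | succ s ih =>
      intro i
      rw [hstep s]
      exact Finset.sum_nonneg fun j _ => mul_nonneg (hPpos i j).le (ih j)
  -- contraction constants
  have hne : (Finset.univ : Finset (ZMod I × ZMod I)).Nonempty := Finset.univ_nonempty
  set c : ℝ := Finset.inf' Finset.univ hne (fun p : ZMod I × ZMod I => P p.1 p.2) with hcdef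
  have hcle : ∀ i j, c ≤ P i j := fun i j => Finset.inf'_le _ (Finset.mem_univ (i, j))
  have hcpos : 0 < c := by
    rw [hcdef, Finset.lt_inf'_iff]
    exact fun p _ => hPpos p.1 p.2
  set θ : ℝ := 1 - (Fintype.card (ZMod I)) * c with hθdef
  have hcard : 0 < (Fintype.card (ZMod I) : ℝ) := by
    exact_mod_cast Fintype.card_pos
  have hθlt : θ < 1 := by
    rw [hθdef]; nlinarith
  have hθ0 : 0 ≤ θ := by
    have hle : (Fintype.card (ZMod I) : ℝ) * c ≤ ∑ i, P i 0 := by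
      calc (Fintype.card (ZMod I) : ℝ) * c = ∑ _i : ZMod I, c := by
            rw [Finset.sum_const, Finset.card_univ, nsmul_eq_mul]
        _ ≤ ∑ i, P i 0 := Finset.sum_le_sum fun i _ => hcle i 0
    rw [hPcol 0] at hle
    rw [hθdef]; linarith
  -- differences
  set d : ℕ → ZMod I → ℝ := fun s => W (s+1) - W s with hddef
  have hdsum : ∀ s, ∑ j, d s j = 0 := by
    intro s
    simp only [hddef, Pi.sub_apply]
    rw [Finset.sum_sub_distrib, hWsum (s+1), hWsum s, sub_self]
  have hdstep : ∀ s, d (s+1) = P *ᵥ d s := by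
    intro s
    show W (s+2) - W (s+1) = P *ᵥ (W (s+1) - W s)
    rw [Matrix.mulVec_sub, ← hstep (s+1), ← hstep s]
  set D : ℝ := ∑ i, |d 0 i| with hD
  have hDnn : 0 ≤ D := Finset.sum_nonneg fun i _ => abs_nonneg _
  have hNs : ∀ s, ∑ i, |d s i| ≤ θ ^ s * D := by
    intro s; induction s with
    | zero => simp [hD]
    | succ s ih =>
      rw [hdstep s]
      calc ∑ i, |(P *ᵥ d s) i| ≤ θ * ∑ i, |d s i| := by
            have := aux_contract hcle hPcol (hdsum s)
            rw [hθdef]; exact this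
        _ ≤ θ * (θ^s * D) := mul_le_mul_of_nonneg_left ih hθ0
        _ = θ^(s+1) * D := by ring
  -- Cauchy sequence
  have hdist : ∀ n : ℕ, dist (W n) (W (n+1)) ≤ D * θ ^ n := by
    intro n
    rw [dist_pi_le_iff (mul_nonneg hDnn (pow_nonneg hθ0 n))]
    intro i
    have h1 : |d n i| ≤ θ^n * D :=
      le_trans (Finset.single_le_sum (fun j _ => abs_nonneg (d n j)) (Finset.mem_univ i))
        (hNs n)
    rw [Real.dist_eq]
    calc |W n i - W (n+1) i| = |d n i| := by
          rw [abs_sub_comm]; rfl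
      _ ≤ θ^n * D := h1
      _ = D * θ^n := mul_comm _ _
  have hcauchy : CauchySeq W := cauchySeq_of_le_geometric θ D hθlt hdist
  obtain ⟨M, hM⟩ := cauchySeq_tendsto_of_complete hcauchy
  have htendi : ∀ i, Tendsto (fun s => W s i) atTop (nhds (M i)) := by
    intro i
    exact (tendsto_pi_nhds.mp hM) i
  -- limit properties
  have hMnn : ∀ i, 0 ≤ M i := fun i =>
    ge_of_tendsto (htendi i) (Eventually.of_forall fun s => hWnn s i)
  have hMsum : ∑ i, M i = ∑ i, W 0 i := by
    have h1 : Tendsto (fun s => ∑ i, W s i) atTop (nhds (∑ i, M i)) :=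
      tendsto_finset_sum _ fun i _ => htendi i
    have h2 : (fun s => ∑ i, W s i) = fun _ => ∑ i, W 0 i := funext hWsum
    rw [h2] at h1
    exact tendsto_nhds_unique h1 tendsto_const_nhds
  have hMmass : hh I * ∑ i, M i = 1 := by rw [hMsum]; exact hW0sum
  have hPM : P *ᵥ M = M := by
    funext i
    have h1 : Tendsto (fun s => (P *ᵥ W s) i) atTop (nhds ((P *ᵥ M) i)) := by
      simp only [Matrix.mulVec, dotProduct]
      exact tendsto_finset_sum _ fun j _ => (htendi j).const_mul _
    have h2 : (fun s => (P *ᵥ W s) i) = fun s => W (s+1) i :=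
      funext fun s => by rw [← hstep s]
    rw [h2] at h1
    have h3 : Tendsto (fun s => W (s+1) i) atTop (nhds (M i)) :=
      (htendi i).comp (tendsto_add_atTop_nat 1)
    exact tendsto_nhds_unique h1 h3
  have hBM : B *ᵥ M = μ • M := by
    have h1 : B *ᵥ (P *ᵥ M) = μ • M := by
      rw [hPdef, Matrix.smul_mulVec, Matrix.mulVec_smul, Matrix.mulVec_mulVec, hBB,
        Matrix.one_mulVec]
    rw [hPM] at h1; exact h1
  have hAM : A *ᵥ M = 0 := by
    have h2 : B *ᵥ M = μ • M + A *ᵥ M := by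
      rw [hBdef, Matrix.add_mulVec, Matrix.smul_mulVec, Matrix.one_mulVec]
    rw [hBM] at h2
    exact (left_eq_add.mp h2)
  -- uniqueness via contraction
  have hfix : ∀ v : ZMod I → ℝ, (∑ j, v j = 0) → P *ᵥ v = v → v = 0 := by
    intro v hsum hfixv
    have h1 : ∑ i, |v i| ≤ θ * ∑ i, |v i| := by
      have := aux_contract hcle hPcol hsum
      rw [hfixv] at this
      rw [hθdef]; exact this
    have h2 : 0 ≤ ∑ i, |v i| := Finset.sum_nonneg fun i _ => abs_nonneg _
    have h3 : ∑ i, |v i| = 0 := by nlinarith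
    funext i
    have := (Finset.sum_eq_zero_iff_of_nonneg (fun i _ => abs_nonneg (v i))).mp h3 i
      (Finset.mem_univ i)
    exact abs_eq_zero.mp this
  refine ⟨M, ⟨hAM, hMmass, hMnn⟩, ?_, hM⟩
  rintro M' ⟨hAM', hsum', -⟩
  have hBM' : B *ᵥ M' = μ • M' := by
    rw [hBdef, Matrix.add_mulVec, Matrix.smul_mulVec, Matrix.one_mulVec, hAM', add_zero]
  have hPM' : P *ᵥ M' = M' := by
    have h2 : B⁻¹ *ᵥ (B *ᵥ M') = B⁻¹ *ᵥ (μ • M') := by rw [hBM']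
    rw [Matrix.mulVec_mulVec, hBB', Matrix.one_mulVec, Matrix.mulVec_smul] at h2
    rw [hPdef, Matrix.smul_mulVec]
    exact h2.symm
  have hMsum' : ∑ i, M' i = ∑ i, M i := by
    have hhne : hh I ≠ 0 := ne_of_gt hp
    exact mul_left_cancel₀ hhne (hsum'.trans hMmass.symm)
  have hv := hfix (M' - M)
    (by simp only [Pi.sub_apply]; rw [Finset.sum_sub_distrib, hMsum', sub_self])
    (by rw [Matrix.mulVec_sub, hPM, hPM'])
  exact sub_eq_zero.mp hv
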